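/- Symmetry of the quantum Wasserstein distance (Remark 3.5): let ρ, σ be density matrices of size n and R₁, …, R_N Hermitian n×n complex matrices with cost operator C. Then the infimum over couplings Π between ρ and σ of (Tr(C * Π)).re equals the infimum over couplings Π' between σ and ρ of (Tr(C * Π')).re. -/

import Mathlib

open Matrix
open scoped ComplexOrder

noncomputable section

/-- A density matrix: positive semidefinite with trace 1. -/
def IsDensity {ι : Type*} [Fintype ι] (ρ : Matrix ι ι ℂ) : Prop :=
  ρ.PosSemidef ∧ ρ.trace = 1

/-- A coupling between the quantum states `ρ` and `σ`. -/
def IsCoupling {ι : Type*} [Fintype ι] (ρ σ : Matrix ι ι ℂ)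
    (P : Matrix (ι × ι) (ι × ι) ℂ) : Prop :=
  P.PosSemidef ∧ P.trace = 1 ∧
  (∀ j l, ∑ i, P (i, j) (i, l) = ρ l j) ∧
  (∀ i k, ∑ j, P (i, j) (k, j) = σ i k)

/-- The cost operator `C = ∑ s, (Rₛ ⊗ I − I ⊗ Rₛᵀ)²` associated to a family of
Hermitian matrices. -/
def costOp {ι : Type*} [Fintype ι] [DecidableEq ι] {κ : Type*} [Fintype κ]
    (R : κ → Matrix ι ι ℂ) : Matrix (ι × ι) (ι × ι) ℂ :=
  ∑ s, (Matrix.of (fun p q : ι × ι =>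
      R s p.1 q.1 * (if p.2 = q.2 then 1 else 0)
      - (if p.1 = q.1 then 1 else 0) * R s q.2 p.2)) ^ 2

lemma costOp_swap {n N : ℕ} (R : Fin N → Matrix (Fin n) (Fin n) ℂ) (a b : Fin n × Fin n) :
    costOp R (Prod.swap a) (Prod.swap b) = costOp R b a := by
  unfold costOp
  simp only [Matrix.sum_apply, pow_two, Matrix.mul_apply]
  refine Finset.sum_congr rfl fun s _ => ?_
  refine Fintype.sum_equiv (Equiv.prodComm (Fin n) (Fin n)) _ _ fun r => ?_
  simp only [Equiv.prodComm_apply]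
  obtain ⟨a1, a2⟩ := a; obtain ⟨b1, b2⟩ := b; obtain ⟨r1, r2⟩ := r
  simp only [Matrix.of_apply, Prod.swap_prod_mk]
  by_cases h1 : a1 = r1 <;> by_cases h2 : a2 = r2 <;>
    by_cases h3 : r1 = b1 <;> by_cases h4 : r2 = b2 <;>
    simp [h1, h2, h3, h4, eq_comm] <;> ring

/-- The swapped-and-transposed coupling. -/
def swapC {n : ℕ} (P : Matrix (Fin n × Fin n) (Fin n × Fin n) ℂ) :
    Matrix (Fin n × Fin n) (Fin n × Fin n) ℂ :=
  Matrix.of fun a b => P (Prod.swap b) (Prod.swap a)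

lemma swapC_coupling {n : ℕ} {ρ σ : Matrix (Fin n) (Fin n) ℂ}
    {P : Matrix (Fin n × Fin n) (Fin n × Fin n) ℂ} (hP : IsCoupling ρ σ P) :
    IsCoupling σ ρ (swapC P) := by
  obtain ⟨hpsd, htr, hm1, hm2⟩ := hP
  refine ⟨?_, ?_, ?_, ?_⟩
  · have : swapC P = (P.submatrix Prod.swap Prod.swap)ᵀ := rfl
    rw [this]
    exact (hpsd.submatrix _).transpose
  · rw [← htr]
    unfold Matrix.trace swapC
    exact Fintype.sum_equiv (Equiv.prodComm (Fin n) (Fin n)) _ _ (fun a => rfl)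
  · intro j l
    simpa [swapC] using hm2 l j
  · intro i k
    simpa [swapC] using hm1 k i

lemma swapC_trace {n N : ℕ} (R : Fin N → Matrix (Fin n) (Fin n) ℂ)
    (P : Matrix (Fin n × Fin n) (Fin n × Fin n) ℂ) :
    Matrix.trace (costOp R * swapC P) = Matrix.trace (costOp R * P) := by
  simp only [Matrix.trace, Matrix.diag, Matrix.mul_apply, swapC, Matrix.of_apply]
  rw [Finset.sum_comm]
  refine Fintype.sum_equiv (Equiv.prodComm (Fin n) (Fin n)) _ _ fun a => ?_
  refine Fintype.sum_equiv (Equiv.prodComm (Fin n) (Fin n)) _ _ fun b => ?_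
  simp only [Equiv.prodComm_apply]
  rw [costOp_swap]

/-- **Symmetry of the quantum Wasserstein distance** (Remark 3.5). -/
theorem quantum_wasserstein_symm {n N : ℕ}
    (ρ σ : Matrix (Fin n) (Fin n) ℂ) (hρ : IsDensity ρ) (hσ : IsDensity σ)
    (R : Fin N → Matrix (Fin n) (Fin n) ℂ) (hR : ∀ s, (R s).IsHermitian) :
    sInf {x : ℝ | ∃ P, IsCoupling ρ σ P ∧ x = (Matrix.trace (costOp R * P)).re}
      = sInf {x : ℝ | ∃ P', IsCoupling σ ρ P' ∧ x = (Matrix.trace (costOp R * P')).re} := by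
  congr 1
  ext x
  constructor
  · rintro ⟨P, hP, rfl⟩
    exact ⟨swapC P, swapC_coupling hP, by rw [swapC_trace]⟩
  · rintro ⟨P, hP, rfl⟩
    exact ⟨swapC P, swapC_coupling hP, by rw [swapC_trace]⟩
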